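/- Let H be the 3-dimensional Heisenberg Lie algebra with basis x, y, z, [x,y] = z, z central. Let V be an H-module and v ∈ V a vector with x^{k+1}v = 0 for some k ≥ 0. Then for all nonnegative integers a, b with a > k, the vector y^{b} z^{a} v lies in the span of the vectors x^{p} y^{q} z^{s} v with p > 0, q ≥ 0, 0 ≤ s ≤ k. -/

import Mathlib

open Finset

/-- Coefficient in the reordering formula. -/
noncomputable def hc (n i q : ℕ) : ℂ := (-1)^i * n.choose i * q.descFactorial i

lemma hc_rec (n i q : ℕ) :
    hc (n+1) (i+1) q = hc n (i+1) q - ((q - i : ℕ) : ℂ) * hc n i q := by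
  simp only [hc, Nat.choose_succ_succ', Nat.descFactorial_succ]
  push_cast
  ring

section heis

variable {A : Type*} [Ring A] [Algebra ℂ A] (X Y Z : A)
variable (hXY : X*Y - Y*X = Z) (hXZ : X*Z = Z*X) (hYZ : Y*Z = Z*Y)

include hXY hYZ in
lemma heis_L1 : ∀ q : ℕ, Y^q * X = X * Y^q - (q : ℂ) • (Y^(q-1) * Z) := by
  intro q
  induction q with
  | zero => simp
  | succ q ih =>
    have hYX : Y * X = X * Y - Z := by rw [← hXY]; abel
    have hZY : Z * Y^q = Y^q * Z := ((Commute.symm hYZ).pow_right q)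
    rw [pow_succ', mul_assoc, ih, mul_sub, mul_smul_comm]
    rcases Nat.eq_zero_or_pos q with h | h
    · subst h
      simp [hYX, pow_succ']
    · have h1 : Y * (Y^(q-1) * Z) = Y^q * Z := by
        rw [← mul_assoc, ← pow_succ']
        congr 2
        omega
      rw [h1, Nat.add_sub_cancel]
      push_cast
      rw [← mul_assoc, hYX, sub_mul, mul_assoc, ← pow_succ', hZY, add_smul, one_smul]
      abel

include hXY hXZ hYZ in
lemma heis_key : ∀ n q : ℕ, Y^q * X^n
    = ∑ i ∈ range (n+1), hc n i q • (X^(n-i) * Y^(q-i) * Z^i) := by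
  intro n
  induction n with
  | zero => intro q; simp [hc]
  | succ n ih =>
    intro q
    have hZXp : ∀ i : ℕ, Z^i * X = X * Z^i := fun i =>
      ((Commute.symm hXZ).pow_left i)
    have step : ∀ i ∈ range (n+1),
        hc n i q • (X^(n-i) * Y^(q-i) * Z^i) * X
        = hc n i q • (X^(n+1-i) * Y^(q-i) * Z^i)
          - (hc n i q * ((q-i : ℕ) : ℂ)) • (X^(n-i) * Y^(q-(i+1)) * Z^(i+1)) := by
      intro i hi
      rw [mem_range] at hi
      have hin : i ≤ n := Nat.lt_succ_iff.mp hi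
      have h1 : X^(n-i) * Y^(q-i) * Z^i * X = X^(n-i) * (Y^(q-i) * X) * Z^i := by
        rw [mul_assoc, hZXp i, ← mul_assoc, ← mul_assoc]
      have h2 : X^(n-i) * (X * Y^(q-i)) * Z^i = X^(n+1-i) * Y^(q-i) * Z^i := by
        rw [← mul_assoc, ← pow_succ]
        congr 3
        omega
      have h3 : X^(n-i) * (Y^(q-i-1) * Z) * Z^i = X^(n-i) * Y^(q-(i+1)) * Z^(i+1) := by
        have hq : q - i - 1 = q - (i+1) := by omega
        rw [hq, ← mul_assoc, mul_assoc _ Z (Z^i), ← pow_succ']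
      rw [smul_mul_assoc, h1, heis_L1 X Y Z hXY hYZ (q-i), mul_sub, sub_mul,
        mul_smul_comm, smul_mul_assoc, smul_sub, smul_smul, h2, h3]
    calc Y^q * X^(n+1) = (Y^q * X^n) * X := by rw [pow_succ, mul_assoc]
      _ = ∑ i ∈ range (n+1), hc n i q • (X^(n-i) * Y^(q-i) * Z^i) * X := by
          rw [ih, sum_mul]
      _ = ∑ i ∈ range (n+1), (hc n i q • (X^(n+1-i) * Y^(q-i) * Z^i)
          - (hc n i q * ((q-i : ℕ) : ℂ)) • (X^(n-i) * Y^(q-(i+1)) * Z^(i+1))) :=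
          sum_congr rfl step
      _ = ∑ i ∈ range (n+1), hc n i q • (X^(n+1-i) * Y^(q-i) * Z^i)
          - ∑ i ∈ range (n+1), (hc n i q * ((q-i : ℕ) : ℂ))
              • (X^(n-i) * Y^(q-(i+1)) * Z^(i+1)) := by
          rw [sum_sub_distrib]
      _ = ∑ i ∈ range (n+2), hc (n+1) i q • (X^(n+1-i) * Y^(q-i) * Z^i) := by
          rw [sum_range_succ' (fun i => hc (n+1) i q • (X^(n+1-i) * Y^(q-i) * Z^i)) (n+1),
            sum_range_succ' (fun i => hc n i q • (X^(n+1-i) * Y^(q-i) * Z^i)) n]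
          have e0 : hc (n+1) 0 q = hc n 0 q := by simp [hc]
          have hterm : ∀ i ∈ range (n+1),
              hc (n+1) (i+1) q • (X^(n+1-(i+1)) * Y^(q-(i+1)) * Z^(i+1))
              = hc n (i+1) q • (X^(n+1-(i+1)) * Y^(q-(i+1)) * Z^(i+1))
                - (hc n i q * ((q-i : ℕ) : ℂ)) • (X^(n-i) * Y^(q-(i+1)) * Z^(i+1)) := by
            intro i hi
            rw [mem_range] at hi
            have : n + 1 - (i+1) = n - i := by omega
            rw [this, hc_rec, sub_smul]
            ring_nf
          rw [sum_congr rfl hterm, sum_sub_distrib]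
          have hlast : hc n (n+1) q • (X^(n+1-(n+1)) * Y^(q-(n+1)) * Z^(n+1)) = 0 := by
            simp [hc, Nat.choose_succ_self]
          rw [sum_range_succ (fun i => hc n (i+1) q • (X^(n+1-(i+1)) * Y^(q-(i+1)) * Z^(i+1))) n]
          rw [hlast, add_zero, e0]
          abel

end heis

attribute [local instance] LieRing.ofAssociativeRing

/-- for the Heisenberg algebra ⟨x,y,z⟩ with [x,y]=z central, acting on V,
if x^{k+1}v = 0 then for a > k, y^b z^a v lies in the span of the vectors x^p y^q z^s v
with p > 0, q ≥ 0, 0 ≤ s ≤ k. -/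
theorem stmt11 {L : Type*} [LieRing L] [LieAlgebra ℂ L]
    {V : Type*} [AddCommGroup V] [Module ℂ V] [LieRingModule L V] [LieModule ℂ L V]
    (x y z : L) (hxy : ⁅x, y⁆ = z) (hxz : ⁅x, z⁆ = 0) (hyz : ⁅y, z⁆ = 0)
    (v : V) (k : ℕ) (hx : ((LieModule.toEnd ℂ L V x) ^ (k + 1)) v = 0)
    (a b : ℕ) (ha : k < a) :
    ((LieModule.toEnd ℂ L V y) ^ b) (((LieModule.toEnd ℂ L V z) ^ a) v) ∈
      Submodule.span ℂ {w : V | ∃ p q s : ℕ, 0 < p ∧ s ≤ k ∧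
        w = ((LieModule.toEnd ℂ L V x) ^ p) (((LieModule.toEnd ℂ L V y) ^ q)
          (((LieModule.toEnd ℂ L V z) ^ s) v))} := by
  set X := LieModule.toEnd ℂ L V x with hX
  set Y := LieModule.toEnd ℂ L V y with hY
  set Z := LieModule.toEnd ℂ L V z with hZ
  set S : Set V := {w : V | ∃ p q s : ℕ, 0 < p ∧ s ≤ k ∧
      w = (X ^ p) ((Y ^ q) ((Z ^ s) v))} with hS
  set M : Submodule ℂ V := Submodule.span ℂ S with hM
  have hXY : X * Y - Y * X = Z := by
    have h := LieHom.map_lie (LieModule.toEnd ℂ L V) x y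
    rw [hxy] at h
    calc X * Y - Y * X = ⁅X, Y⁆ := (LieRing.of_associative_ring_bracket X Y).symm
      _ = Z := h.symm
  have hXZ : X * Z = Z * X := by
    have h := LieHom.map_lie (LieModule.toEnd ℂ L V) x z
    rw [hxz] at h
    have h0 : X * Z - Z * X = (0 : Module.End ℂ V) := by
      rw [← LieRing.of_associative_ring_bracket, ← h]
      exact map_zero _
    exact sub_eq_zero.mp h0
  have hYZ : Y * Z = Z * Y := by
    have h := LieHom.map_lie (LieModule.toEnd ℂ L V) y z
    rw [hyz] at h
    have h0 : Y * Z - Z * Y = (0 : Module.End ℂ V) := by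
      rw [← LieRing.of_associative_ring_bracket, ← h]
      exact map_zero _
    exact sub_eq_zero.mp h0
  -- X preserves M
  have hXM : ∀ w ∈ M, X w ∈ M := by
    intro w hw
    induction hw using Submodule.span_induction with
    | mem u hu =>
      obtain ⟨p, q, s, hp, hs, rfl⟩ := hu
      apply Submodule.subset_span
      exact ⟨p + 1, q, s, by omega, hs, by rw [pow_succ']; rfl⟩
    | zero => simp
    | add u w hu hw hu' hw' => rw [map_add]; exact M.add_mem hu' hw'
    | smul c u hu hu' => rw [map_smul]; exact M.smul_mem c hu'
  have hXnM : ∀ (n : ℕ) (w : V), w ∈ M → (X ^ n) w ∈ M := by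
    intro n
    induction n with
    | zero => intro w hw; simpa using hw
    | succ n ih =>
      intro w hw
      rw [pow_succ']
      exact hXM _ (ih w hw)
  -- main claim by strong induction
  suffices H : ∀ a, k < a → ∀ b, (Y ^ b) ((Z ^ a) v) ∈ M by exact H a ha b
  clear ha
  intro a
  induction a using Nat.strong_induction_on with
  | _ a IH =>
    intro ha b
    -- X^a v = 0
    have hXa : (X ^ a) v = 0 := by
      have : X ^ a = X ^ (a - (k+1)) * X ^ (k+1) := by
        rw [← pow_add]; congr 1; omega
      rw [this, Module.End.mul_apply, hx, map_zero]
    have key := heis_key X Y Z hXY hXZ hYZ a (b + a)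
    have hkey0 : (0 : V) = ∑ i ∈ Finset.range (a+1),
        hc a i (b+a) • ((X^(a-i)) ((Y^(b+a-i)) ((Z^i) v))) := by
      have happ := congrArg (fun f : Module.End ℂ V => f v) key
      simp only [LinearMap.sum_apply, LinearMap.smul_apply, Module.End.mul_apply] at happ
      rw [hXa, map_zero] at happ
      exact happ
    rw [Finset.sum_range_succ] at hkey0
    have hlast : hc a a (b+a) • ((X^(a-a)) ((Y^(b+a-a)) ((Z^a) v)))
        = hc a a (b+a) • ((Y ^ b) ((Z ^ a) v)) := by
      rw [Nat.sub_self, Nat.add_sub_cancel, pow_zero]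
      rfl
    rw [hlast] at hkey0
    have hc_ne : hc a a (b+a) ≠ 0 := by
      have hd : (((b+a).descFactorial a : ℕ) : ℂ) ≠ 0 := by
        rw [Nat.cast_ne_zero]
        intro h
        rw [Nat.descFactorial_eq_zero_iff_lt] at h
        omega
      unfold hc
      rw [Nat.choose_self]
      exact mul_ne_zero (mul_ne_zero (pow_ne_zero a (by norm_num : (-1:ℂ) ≠ 0))
        (by norm_num)) hd
    have hmem : ∑ i ∈ Finset.range a,
        hc a i (b+a) • ((X^(a-i)) ((Y^(b+a-i)) ((Z^i) v))) ∈ M := by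
      apply M.sum_mem
      intro i hi
      rw [Finset.mem_range] at hi
      apply M.smul_mem
      rcases le_or_gt i k with hik | hik
      · apply Submodule.subset_span
        exact ⟨a - i, b + a - i, i, by omega, hik, rfl⟩
      · exact hXnM (a - i) _ (IH i hi hik (b + a - i))
    have hw : (Y ^ b) ((Z ^ a) v)
        = (hc a a (b+a))⁻¹ • (-(∑ i ∈ Finset.range a,
            hc a i (b+a) • ((X^(a-i)) ((Y^(b+a-i)) ((Z^i) v))))) := by
      rw [eq_inv_smul_iff₀ hc_ne]
      exact (neg_eq_of_add_eq_zero_right hkey0.symm).symm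
    rw [hw]
    exact M.smul_mem _ (M.neg_mem hmem)
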